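/- Let C ↔ f : [a,b] → ℝ^M (a < b) be a continuous and rectifiable curve and assume M ≥ 2. Then the M-dimensional Lebesgue measure of the graph [C] = f([a,b]) ⊂ ℝ^M is equal to 0. -/

import Mathlib

open scoped BigOperators ENNReal
open MeasureTheory Filter
open scoped NNReal

noncomputable section

/-- A partition `a = x 0 < x 1 < ⋯ < x n = b` of the interval `[a,b]`. -/
structure CurvePartition (a b : ℝ) where
  n : ℕ
  x : Fin (n + 1) → ℝ
  mono : StrictMono x
  first : x 0 = a
  last : x (Fin.last n) = b

/-- The mesh `‖P‖ = maxᵢ (xᵢ − xᵢ₋₁)` of a partition. -/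
def CurvePartition.mesh {a b : ℝ} (P : CurvePartition a b) : ℝ :=
  ⨆ i : Fin P.n, (P.x i.succ - P.x i.castSucc)

/-- The inscribed sum `V(f;P) = Σᵢ ‖f(xᵢ) − f(xᵢ₋₁)‖`. -/
def inscribedSum {M : ℕ} (f : ℝ → EuclideanSpace ℝ (Fin M)) {a b : ℝ}
    (P : CurvePartition a b) : ℝ :=
  ∑ i : Fin P.n, ‖f (P.x i.succ) - f (P.x i.castSucc)‖

/-- The length `ℓ(C)` of the curve `C ↔ f : [a,b] → ℝ^M`: the supremum of the inscribed sums
over all partitions of `[a,b]`, a value in `[0,+∞]`. -/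
def curveLength {M : ℕ} (f : ℝ → EuclideanSpace ℝ (Fin M)) (a b : ℝ) : ℝ≥0∞ :=
  ⨆ P : CurvePartition a b, ENNReal.ofReal (inscribedSum f P)

/-- The total variation `T_h[a,b]` of a real function `h` on `[a,b]`. -/
def totalVariation (h : ℝ → ℝ) (a b : ℝ) : ℝ≥0∞ :=
  ⨆ P : CurvePartition a b, ENNReal.ofReal (∑ i : Fin P.n, |h (P.x i.succ) - h (P.x i.castSucc)|)

/-- The positive variation `T_h⁺[a,b]` of a real function `h` on `[a,b]`. -/
def posVariation (h : ℝ → ℝ) (a b : ℝ) : ℝ≥0∞ :=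
  ⨆ P : CurvePartition a b,
    ENNReal.ofReal (∑ i : Fin P.n, max (h (P.x i.succ) - h (P.x i.castSucc)) 0)

/-- The negative variation `T_h⁻[a,b]` of a real function `h` on `[a,b]`. -/
def negVariation (h : ℝ → ℝ) (a b : ℝ) : ℝ≥0∞ :=
  ⨆ P : CurvePartition a b,
    ENNReal.ofReal (∑ i : Fin P.n, max (h (P.x i.castSucc) - h (P.x i.succ)) 0)

/-- `h` is absolutely continuous on `[a,b]`: for every `ε > 0` there is `δ > 0` such that
`Σᵢ |h(vᵢ) − h(uᵢ)| < ε` for every finite family of pairwise non-overlapping subintervals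
`[uᵢ,vᵢ]` of `[a,b]` of total length `< δ`. -/
def AbsContOn (h : ℝ → ℝ) (a b : ℝ) : Prop :=
  ∀ ε > (0 : ℝ), ∃ δ > (0 : ℝ), ∀ n : ℕ, ∀ u v : Fin n → ℝ,
    (∀ i, a ≤ u i ∧ u i ≤ v i ∧ v i ≤ b) →
    (∀ i j, i ≠ j → Set.Ioo (u i) (v i) ∩ Set.Ioo (u j) (v j) = ∅) →
    (∑ i, (v i - u i)) < δ → (∑ i, |h (v i) - h (u i)|) < ε

/-- `φ` is an increasing homeomorphism of `[a,b]` onto `[c,d]` sending `a` to `c` and `b` to `d`. -/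
def IsIncrHomeo (φ : ℝ → ℝ) (a b c d : ℝ) : Prop :=
  ContinuousOn φ (Set.Icc a b) ∧ StrictMonoOn φ (Set.Icc a b) ∧ φ a = c ∧ φ b = d

/-- `f : [a,b] → ℝ^M` and `g : [c,d] → ℝ^M` are Fréchet equivalent. -/
def FrechetEquiv {M : ℕ} (f : ℝ → EuclideanSpace ℝ (Fin M)) (a b : ℝ)
    (g : ℝ → EuclideanSpace ℝ (Fin M)) (c d : ℝ) : Prop :=
  ∀ ε > (0 : ℝ), ∃ φ : ℝ → ℝ, IsIncrHomeo φ a b c d ∧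
    ∀ x ∈ Set.Icc a b, ‖f x - g (φ x)‖ < ε

/-- The Fréchet distance between the curves `C ↔ f : [a,b] → ℝ^M` and `D ↔ g : [c,d] → ℝ^M`. -/
def frechetDist {M : ℕ} (f : ℝ → EuclideanSpace ℝ (Fin M)) (a b : ℝ)
    (g : ℝ → EuclideanSpace ℝ (Fin M)) (c d : ℝ) : ℝ :=
  ⨅ φ : {φ : ℝ → ℝ // IsIncrHomeo φ a b c d}, ⨆ x ∈ Set.Icc a b, ‖f x - g (φ.1 x)‖

/-- A parametric integrand: a continuous `F : ℝ^M × ℝ^M → ℝ` positively homogeneous of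
degree 1 in the second variable. -/
def IsParametricIntegrand {M : ℕ}
    (F : EuclideanSpace ℝ (Fin M) → EuclideanSpace ℝ (Fin M) → ℝ) : Prop :=
  Continuous (fun p : EuclideanSpace ℝ (Fin M) × EuclideanSpace ℝ (Fin M) => F p.1 p.2) ∧
  ∀ K : ℝ, 0 ≤ K → ∀ x t, F x (K • t) = K * F x t

/-- `L` is the line integral `∫_C F` of `F` along the curve `C ↔ f : [a,b] → ℝ^M`:
the limit, as the mesh tends to `0`, of the Riemann-type sums
`Σᵢ F(f(ξᵢ), f(xᵢ) − f(xᵢ₋₁))` over tagged partitions of `[a,b]`. -/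
def IsLineIntegral {M : ℕ} (F : EuclideanSpace ℝ (Fin M) → EuclideanSpace ℝ (Fin M) → ℝ)
    (f : ℝ → EuclideanSpace ℝ (Fin M)) (a b : ℝ) (L : ℝ) : Prop :=
  ∀ ε > (0 : ℝ), ∃ δ > (0 : ℝ), ∀ P : CurvePartition a b, P.mesh < δ →
    ∀ ξ : Fin P.n → ℝ, (∀ i, ξ i ∈ Set.Icc (P.x i.castSucc) (P.x i.succ)) →
    |(∑ i : Fin P.n, F (f (ξ i)) (f (P.x i.succ) - f (P.x i.castSucc))) - L| < ε

/-- Triangle inequality along a chain of points. -/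
private lemma chain_edist_le {E : Type*} [PseudoEMetricSpace E] (g : ℕ → E) {κ : ℕ → ℕ}
    (hκ : Monotone κ) (n : ℕ) :
    ∑ i ∈ Finset.range n, edist (g (κ i)) (g (κ (i + 1))) ≤
      ∑ j ∈ Finset.Ico (κ 0) (κ n), edist (g j) (g (j + 1)) := by
  induction n with
  | zero => simp
  | succ n ih =>
    rw [Finset.sum_range_succ,
      ← Finset.sum_Ico_consecutive _ (hκ (Nat.zero_le n)) (hκ (Nat.le_succ n))]
    exact add_le_add ih (edist_le_Ico_sum_edist g (hκ (Nat.le_succ n)))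

/-- A rectifiable curve has bounded variation on `[a,b]`. -/
private lemma boundedVariation_of_rect {M : ℕ} (f : ℝ → EuclideanSpace ℝ (Fin M))
    {a b : ℝ} (hab : a < b) :
    eVariationOn f (Set.Icc a b) ≤ curveLength f a b := by
  refine iSup_le fun p => ?_
  obtain ⟨n, u, hu, us⟩ := p
  -- the finite set of all relevant points
  set T : Finset ℝ := insert a (insert b ((Finset.range (n + 1)).image u)) with hT
  have haT : a ∈ T := by simp [hT]
  have hbT : b ∈ T := by simp [hT]
  have hmemIcc : ∀ z ∈ T, z ∈ Set.Icc a b := by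
    intro z hz
    simp only [hT, Finset.mem_insert, Finset.mem_image, Finset.mem_range] at hz
    rcases hz with rfl | rfl | ⟨i, _, rfl⟩
    · exact ⟨le_refl _, hab.le⟩
    · exact ⟨hab.le, le_refl _⟩
    · exact us i
  have hcardpos : 0 < T.card := Finset.card_pos.2 ⟨a, haT⟩
  set m : ℕ := T.card - 1 with hm
  have hc : T.card = m + 1 := (Nat.succ_pred_eq_of_pos hcardpos).symm
  set iso := T.orderIsoOfFin hc with hiso
  -- the partition of `[a,b]` through all points of `T`
  set w : ℕ → ℝ := fun j => (iso ⟨min j m, Nat.lt_succ_of_le (min_le_right _ _)⟩ : ℝ) with hw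
  have hwj : ∀ j : Fin (m + 1), w j = (iso j : ℝ) := by
    intro j
    simp only [hw]
    have hj : (⟨min (j : ℕ) m, Nat.lt_succ_of_le (min_le_right _ _)⟩ : Fin (m + 1)) = j := by
      apply Fin.ext
      exact Nat.min_eq_left (Nat.lt_succ_iff.1 j.isLt)
    rw [hj]
  have hxmono : StrictMono fun i : Fin (m + 1) => (iso i : ℝ) := by
    intro i j hij
    exact_mod_cast iso.strictMono hij
  have hrange : ∀ i : Fin (m + 1), (iso i : ℝ) ∈ Set.Icc a b :=
    fun i => hmemIcc _ (iso i).2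
  have hfirst : (iso (0 : Fin (m + 1)) : ℝ) = a := by
    refine le_antisymm ?_ (hrange 0).1
    have := hxmono.monotone (Fin.zero_le (iso.symm ⟨a, haT⟩))
    simpa using this
  have hlast : (iso (Fin.last m) : ℝ) = b := by
    refine le_antisymm (hrange _).2 ?_
    have := hxmono.monotone (Fin.le_last (iso.symm ⟨b, hbT⟩))
    simpa using this
  set P : CurvePartition a b :=
    { n := m, x := fun i => (iso i : ℝ), mono := hxmono, first := hfirst, last := hlast } with hP
  -- the index map
  have humem : ∀ i : ℕ, u (min i n) ∈ T := by
    intro i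
    simp only [hT, Finset.mem_insert]
    exact Or.inr (Or.inr (Finset.mem_image.2 ⟨min i n, Finset.mem_range.2
      (Nat.lt_succ_of_le (min_le_right _ _)), rfl⟩))
  set κ : ℕ → ℕ := fun i => ((iso.symm ⟨u (min i n), humem i⟩ : Fin (m + 1)) : ℕ) with hκdef
  have hκmono : Monotone κ := by
    intro i j hij
    have h1 : u (min i n) ≤ u (min j n) := hu (min_le_min hij (le_refl n))
    have h2 : (⟨u (min i n), humem i⟩ : T) ≤ ⟨u (min j n), humem j⟩ := h1
    exact iso.symm.monotone h2
  have hκm : ∀ i, κ i ≤ m := fun i => Nat.lt_succ_iff.1 (iso.symm _).isLt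
  have hwκ : ∀ i, w (κ i) = u (min i n) := by
    intro i
    have : (⟨min (κ i) m, Nat.lt_succ_of_le (min_le_right _ _)⟩ : Fin (m + 1)) =
        iso.symm ⟨u (min i n), humem i⟩ := by
      apply Fin.ext
      exact Nat.min_eq_left (hκm i)
    simp only [hw, this, OrderIso.apply_symm_apply]
  -- compare the sums
  have key : ∑ i ∈ Finset.range n, edist (f (u (i + 1))) (f (u i)) ≤
      ∑ j ∈ Finset.range m, edist (f (w j)) (f (w (j + 1))) := by
    calc ∑ i ∈ Finset.range n, edist (f (u (i + 1))) (f (u i))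
        = ∑ i ∈ Finset.range n, edist ((f ∘ w) (κ i)) ((f ∘ w) (κ (i + 1))) := by
          refine Finset.sum_congr rfl fun i hi => ?_
          have hi' := Finset.mem_range.1 hi
          rw [Function.comp_apply, Function.comp_apply, hwκ, hwκ,
            Nat.min_eq_left hi'.le, Nat.min_eq_left hi', edist_comm]
      _ ≤ ∑ j ∈ Finset.Ico (κ 0) (κ n), edist ((f ∘ w) j) ((f ∘ w) (j + 1)) :=
          chain_edist_le (f ∘ w) hκmono n
      _ ≤ ∑ j ∈ Finset.range m, edist (f (w j)) (f (w (j + 1))) := by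
          refine Finset.sum_le_sum_of_subset fun j hj => ?_
          rw [Finset.mem_Ico] at hj
          exact Finset.mem_range.2 (lt_of_lt_of_le hj.2 (hκm n))
  refine le_trans key ?_
  have hins : ENNReal.ofReal (inscribedSum f P) =
      ∑ j ∈ Finset.range m, edist (f (w j)) (f (w (j + 1))) := by
    rw [inscribedSum, ENNReal.ofReal_sum_of_nonneg fun _ _ => norm_nonneg _]
    rw [← Fin.sum_univ_eq_sum_range fun j => edist (f (w j)) (f (w (j + 1)))]
    refine Finset.sum_congr rfl fun i _ => ?_
    have h1 : P.x i.succ = w ((i : ℕ) + 1) := by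
      show (iso i.succ : ℝ) = w ((i : ℕ) + 1)
      rw [hwj ⟨(i : ℕ) + 1, Nat.succ_lt_succ i.isLt⟩]
      congr 1
    have h2 : P.x i.castSucc = w (i : ℕ) := by
      show (iso i.castSucc : ℝ) = w (i : ℕ)
      rw [hwj ⟨(i : ℕ), Nat.lt_succ_of_lt i.isLt⟩]
      congr 1
    rw [h1, h2, edist_comm, edist_dist, dist_eq_norm]
  rw [← hins]
  exact le_iSup (fun P : CurvePartition a b => ENNReal.ofReal (inscribedSum f P)) P

/-- Points at equal arclength parameter have equal images, quantitatively. -/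
private lemma dist_le_var {M : ℕ} {f : ℝ → EuclideanSpace ℝ (Fin M)} {a b : ℝ}
    (hbv : BoundedVariationOn f (Set.Icc a b)) (hab : a < b) {x y : ℝ}
    (hx : x ∈ Set.Icc a b) (hy : y ∈ Set.Icc a b) :
    dist (f x) (f y) ≤ |variationOnFromTo f (Set.Icc a b) a y -
      variationOnFromTo f (Set.Icc a b) a x| := by
  have hloc : LocallyBoundedVariationOn f (Set.Icc a b) := hbv.locallyBoundedVariationOn
  have ha : a ∈ Set.Icc a b := ⟨le_refl _, hab.le⟩
  wlog hxy : x ≤ y generalizing x y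
  · rw [dist_comm, abs_sub_comm]
    exact this hy hx (le_of_not_ge hxy)
  have hadd : variationOnFromTo f (Set.Icc a b) a x +
      variationOnFromTo f (Set.Icc a b) x y = variationOnFromTo f (Set.Icc a b) a y :=
    variationOnFromTo.add hloc ha hx hy
  have h1 : dist (f x) (f y) ≤ variationOnFromTo f (Set.Icc a b) x y := by
    rw [variationOnFromTo.eq_of_le f _ hxy]
    exact BoundedVariationOn.dist_le (hbv.mono Set.inter_subset_left)
      ⟨hx, le_refl x, hxy⟩ ⟨hy, hxy, le_refl y⟩
  calc dist (f x) (f y) ≤ variationOnFromTo f (Set.Icc a b) x y := h1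
    _ = variationOnFromTo f (Set.Icc a b) a y - variationOnFromTo f (Set.Icc a b) a x := by
        linarith
    _ ≤ |_| := le_abs_self _

/-- For a continuous rectifiable curve `C ↔ f : [a,b] → ℝ^M` with `M ≥ 2`, the
`M`-dimensional Lebesgue measure of the graph `[C] = f([a,b])` is `0`. -/
theorem volume_graph_eq_zero {M : ℕ} (hM : 2 ≤ M) (a b : ℝ) (hab : a < b)
    (f : ℝ → EuclideanSpace ℝ (Fin M))
    (hcont : ContinuousOn f (Set.Icc a b)) (hrect : curveLength f a b < ⊤) :
    volume (f '' Set.Icc a b) = 0 := by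
  set s : Set ℝ := Set.Icc a b with hs
  have hbv : BoundedVariationOn f s :=
    ne_top_of_le_ne_top hrect.ne (boundedVariation_of_rect f hab)
  -- arclength reparametrization
  set ℓ : ℝ → ℝ := variationOnFromTo f s a with hℓ
  set ψ : ℝ → EuclideanSpace ℝ (Fin M) := f ∘ Function.invFunOn ℓ s with hψdef
  set t : Set ℝ := ℓ '' s with ht
  have hinv : ∀ p ∈ t, Function.invFunOn ℓ s p ∈ s ∧ ℓ (Function.invFunOn ℓ s p) = p := by
    intro p hp
    obtain ⟨x, hxs, hxp⟩ := hp
    exact ⟨Function.invFunOn_mem ⟨x, hxs, hxp⟩, Function.invFunOn_eq ⟨x, hxs, hxp⟩⟩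
  have hψlip : LipschitzOnWith 1 ψ t := by
    refine LipschitzOnWith.of_dist_le_mul fun p hp q hq => ?_
    obtain ⟨hxs, hxp⟩ := hinv p hp
    obtain ⟨hys, hyp⟩ := hinv q hq
    have := dist_le_var hbv hab hxs hys
    simp only [← hs, ← hℓ] at this
    rw [hxp, hyp] at this
    simpa [hψdef, Real.dist_eq, abs_sub_comm, one_mul] using this
  have himg : f '' s = ψ '' t := by
    apply Set.Subset.antisymm
    · rintro _ ⟨x, hxs, rfl⟩
      refine ⟨ℓ x, ⟨x, hxs, rfl⟩, ?_⟩
      obtain ⟨hxs', hxp'⟩ := hinv (ℓ x) ⟨x, hxs, rfl⟩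
      have := dist_le_var hbv hab hxs' hxs
      simp only [← hs, ← hℓ] at this
      rw [hxp'] at this
      simp only [sub_self, abs_zero] at this
      exact (dist_le_zero.1 this)
    · rintro _ ⟨p, hp, rfl⟩
      exact ⟨Function.invFunOn ℓ s p, (hinv p hp).1, rfl⟩
  -- Hausdorff dimension of the graph is at most 1
  have hdim : dimH (f '' s) ≤ 1 := by
    rw [himg]
    calc dimH (ψ '' t) ≤ dimH t := hψlip.dimH_image_le
      _ ≤ dimH (Set.univ : Set ℝ) := dimH_mono (Set.subset_univ t)
      _ = 1 := Real.dimH_univ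
  -- transfer to `Fin M → ℝ`
  set e : EuclideanSpace ℝ (Fin M) ≃L[ℝ] (Fin M → ℝ) := EuclideanSpace.equiv (Fin M) ℝ with he
  have hdim' : dimH (⇑e '' (f '' s)) ≤ 1 := by
    rw [ContinuousLinearEquiv.dimH_image]
    exact hdim
  have hlt : dimH (⇑e '' (f '' s)) < ((M : ℝ≥0) : ℝ≥0∞) := by
    refine lt_of_le_of_lt hdim' ?_
    have : (1 : ℝ≥0∞) < (M : ℝ≥0∞) := by
      exact_mod_cast lt_of_lt_of_le one_lt_two (by exact_mod_cast hM)
    simpa using this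
  have hH : μH[(M : ℝ)] (⇑e '' (f '' s)) = 0 := by
    have := hausdorffMeasure_of_dimH_lt (X := Fin M → ℝ) hlt
    simpa using this
  have hvol : volume (⇑e '' (f '' s)) = 0 := by
    have hpi : (μH[(Fintype.card (Fin M) : ℝ)] : Measure (Fin M → ℝ)) = volume :=
      MeasureTheory.hausdorffMeasure_pi_real
    rw [Fintype.card_fin] at hpi
    rw [← hpi]
    exact hH
  -- pull back along the measure preserving equivalence
  set m := (MeasurableEquiv.toLp 2 (Fin M → ℝ)).symm with hmeq
  have hme : ⇑m = ⇑e := rfl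
  have hnull : volume (⇑m ⁻¹' (⇑e '' (f '' s))) = 0 := by
    rw [(EuclideanSpace.volume_preserving_symm_measurableEquiv_toLp (Fin M)).measure_preimage
      (MeasureTheory.NullMeasurableSet.of_null hvol)]
    exact hvol
  have hpre : ⇑m ⁻¹' (⇑e '' (f '' s)) = f '' s := by
    rw [hme]
    exact Set.preimage_image_eq _ e.injective
  rw [← hpre]
  exact hnull


end
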